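/- Let F be a field, R the ring of ternions over F, and n ≥ 1. For a vector X ∈ R^{n+1}, the cyclic submodule R·X is free (i.e., r ↦ r·X is injective) with X non-unimodular if and only if the right ideal I_X generated by the coordinates of X equals the ideal I₁ of ternions with zero first column. -/

import Mathlib

set_option synthInstance.maxHeartbeats 1000000
set_option maxHeartbeats 1000000

def ternions (F : Type) [Field F] : Subring (Matrix (Fin 2) (Fin 2) F) where
  carrier := {A | A 1 0 = 0}
  zero_mem' := by simp
  one_mem' := by simp [Matrix.one_apply]
  add_mem' := by
    intro a b ha hb
    simp only [Set.mem_setOf_eq, Matrix.add_apply] at *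
    simp [ha, hb]
  neg_mem' := by
    intro a ha
    simp only [Set.mem_setOf_eq, Matrix.neg_apply] at *
    simp [ha]
  mul_mem' := by
    intro a b ha hb
    simp only [Set.mem_setOf_eq, Matrix.mul_apply, Fin.sum_univ_two] at *
    simp [ha, hb]

namespace TernAux

variable {F : Type} [Field F]

lemma lo (x : ternions F) : x.val 1 0 = 0 := x.2

def tern (p q s : F) : ternions F := ⟨!![p,q;0,s], by show _ = _; simp⟩

lemma tern00 (p q s : F) : (tern p q s : ternions F).val 0 0 = p := rfl
lemma tern01 (p q s : F) : (tern p q s : ternions F).val 0 1 = q := rfl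
lemma tern11 (p q s : F) : (tern p q s : ternions F).val 1 1 = s := rfl

lemma val_mul (x y : ternions F) : (x*y).val = x.val * y.val := rfl

lemma mul00 (x y : ternions F) : (x*y).val 0 0 = x.val 0 0 * y.val 0 0 := by
  rw [val_mul, Matrix.mul_apply, Fin.sum_univ_two, lo y]; ring

lemma mul01 (x y : ternions F) : (x*y).val 0 1 = x.val 0 0 * y.val 0 1 + x.val 0 1 * y.val 1 1 := by
  rw [val_mul, Matrix.mul_apply, Fin.sum_univ_two]

lemma mul11 (x y : ternions F) : (x*y).val 1 1 = x.val 1 1 * y.val 1 1 := by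
  rw [val_mul, Matrix.mul_apply, Fin.sum_univ_two, lo x]; ring

lemma tern_ext {x y : ternions F} (h00 : x.val 0 0 = y.val 0 0)
    (h01 : x.val 0 1 = y.val 0 1) (h11 : x.val 1 1 = y.val 1 1) : x = y := by
  apply Subtype.ext
  ext i j
  fin_cases i <;> fin_cases j <;> simp_all [lo]

lemma zero00 : ((0 : ternions F)).val 0 0 = 0 := rfl
lemma zero01 : ((0 : ternions F)).val 0 1 = 0 := rfl
lemma zero11 : ((0 : ternions F)).val 1 1 = 0 := rfl
lemma one00 : ((1 : ternions F)).val 0 0 = 1 := by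
  show (1 : Matrix (Fin 2) (Fin 2) F) 0 0 = 1; simp
lemma one01 : ((1 : ternions F)).val 0 1 = 0 := by
  show (1 : Matrix (Fin 2) (Fin 2) F) 0 1 = 0; simp [Matrix.one_apply]
lemma one11 : ((1 : ternions F)).val 1 1 = 1 := by
  show (1 : Matrix (Fin 2) (Fin 2) F) 1 1 = 1; simp

lemma add00 (x y : ternions F) : (x+y).val 0 0 = x.val 0 0 + y.val 0 0 := rfl
lemma add01 (x y : ternions F) : (x+y).val 0 1 = x.val 0 1 + y.val 0 1 := rfl
lemma add11 (x y : ternions F) : (x+y).val 1 1 = x.val 1 1 + y.val 1 1 := rfl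

lemma opsmul (m : (ternions F)ᵐᵒᵖ) (x : ternions F) : m • x = x * m.unop := rfl

end TernAux

open TernAux

theorem ternion_nonUnimodular_free_iff (F : Type) [Field F] (n : ℕ) (hn : 1 ≤ n)
    (X : Fin (n + 1) → ternions F) :
    (Function.Injective (fun r : ternions F => r • X) ∧
      ¬ ∃ φ : (Fin (n + 1) → ternions F) →ₗ[ternions F] ternions F, φ X = 1) ↔
      (Submodule.span (ternions F)ᵐᵒᵖ (Set.range X) : Set (ternions F)) =
        {A : ternions F | A.val 0 0 = 0} := by
  have smul_apply : ∀ (r : ternions F) (k : Fin (n+1)), (r • X) k = r * X k := fun r k => rfl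
  constructor
  · rintro ⟨hinj, hUM⟩
    -- step 1: some c_j ≠ 0
    have hc : ∃ j, (X j).val 1 1 ≠ 0 := by
      by_contra h
      push_neg at h
      have h1 : (fun r : ternions F => r • X) (tern (0:F) 1 0) = (fun r : ternions F => r • X) 0 := by
        simp only
        funext k
        rw [smul_apply, smul_apply, zero_mul]
        refine tern_ext ?_ ?_ ?_
        · rw [mul00, tern00, zero00, zero_mul]
        · rw [mul01, tern00, tern01, zero01, h k]; ring
        · rw [mul11, tern11, zero11, zero_mul]
      have := congrArg (fun z : ternions F => z.val 0 1) (hinj h1)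
      simp only [tern01, zero01] at this
      exact one_ne_zero this
    obtain ⟨j, hj⟩ := hc
    -- step 2: all a_i = 0
    have ha : ∀ i, (X i).val 0 0 = 0 := by
      by_contra h
      push_neg at h
      obtain ⟨i, hi⟩ := h
      apply hUM
      set u : ternions F := tern ((X i).val 0 0)⁻¹
        (-(((X i).val 0 0)⁻¹ * (X j).val 0 1 * ((X j).val 1 1)⁻¹)) 0 with hu
      set w : ternions F := tern 0 0 ((X j).val 1 1)⁻¹ with hw
      refine ⟨{ toFun := fun v => v i * u + v j * w
                map_add' := by intro a b; simp only [Pi.add_apply, add_mul]; abel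
                map_smul' := by
                  intro r v
                  simp only [Pi.smul_apply, smul_eq_mul, RingHom.id_apply, mul_add, mul_assoc] }, ?_⟩
      show X i * u + X j * w = 1
      refine tern_ext ?_ ?_ ?_
      · rw [add00, mul00, mul00, hu, hw, tern00, tern00, one00,
          mul_inv_cancel₀ hi, mul_zero, add_zero]
      · rw [add01, mul01, mul01, hu, hw, tern01, tern01, tern11, tern11, one01]
        field_simp
        ring
      · rw [add11, mul11, mul11, hu, hw, tern11, tern11, one11,
          mul_inv_cancel₀ hj, mul_zero, zero_add]
    -- step 3: some pair with nonzero determinant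
    have hex : ∃ i' j', (X i').val 0 1 * (X j').val 1 1 - (X j').val 0 1 * (X i').val 1 1 ≠ 0 := by
      by_contra h
      push_neg at h
      have h1 : (fun r : ternions F => r • X) (tern ((X j).val 1 1) (-(X j).val 0 1) 0)
          = (fun r : ternions F => r • X) 0 := by
        simp only
        funext k
        rw [smul_apply, smul_apply, zero_mul]
        refine tern_ext ?_ ?_ ?_
        · rw [mul00, tern00, zero00, ha k, mul_zero]
        · rw [mul01, tern00, tern01, zero01]
          linear_combination h k j
        · rw [mul11, tern11, zero11, zero_mul]
      have := congrArg (fun z : ternions F => z.val 0 0) (hinj h1)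
      simp only [tern00, zero00] at this
      exact hj this
    obtain ⟨i', j', hd⟩ := hex
    -- step 4: the set equality
    apply Set.Subset.antisymm
    · intro A hA
      simp only [SetLike.mem_coe] at hA
      induction hA using Submodule.span_induction with
      | mem x hx =>
        obtain ⟨k, rfl⟩ := hx
        exact ha k
      | zero => exact zero00
      | add x y hx hy px py =>
        show (x + y).val 0 0 = 0
        rw [add00, px, py, add_zero]
      | smul m x hx px =>
        show (m • x).val 0 0 = 0
        rw [opsmul, mul00, px, zero_mul]
    · intro A hA
      simp only [Set.mem_setOf_eq] at hA
      set d := (X i').val 0 1 * (X j').val 1 1 - (X j').val 0 1 * (X i').val 1 1 with hdd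
      set s := (A.val 0 1 * (X j').val 1 1 - A.val 1 1 * (X j').val 0 1) / d with hs
      set t := (A.val 1 1 * (X i').val 0 1 - A.val 0 1 * (X i').val 1 1) / d with ht
      have key : A = (MulOpposite.op (tern s 0 s)) • X i' + (MulOpposite.op (tern t 0 t)) • X j' := by
        rw [opsmul, opsmul, MulOpposite.unop_op, MulOpposite.unop_op]
        refine tern_ext ?_ ?_ ?_
        · rw [add00, mul00, mul00, tern00, tern00, ha i', ha j', zero_mul, zero_mul,
            add_zero, hA]
        · rw [add01, mul01, mul01, tern01, tern01, tern11, tern11, ha i', ha j',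
            hs, ht, hdd]
          rw [hdd] at hd
          field_simp
          ring
        · rw [add11, mul11, mul11, tern11, tern11, hs, ht, hdd]
          rw [hdd] at hd
          rw [← mul_div_assoc, ← mul_div_assoc, ← add_div, eq_div_iff hd]
          ring
      rw [key]
      exact Submodule.add_mem _
        (Submodule.smul_mem _ _ (Submodule.subset_span ⟨i', rfl⟩))
        (Submodule.smul_mem _ _ (Submodule.subset_span ⟨j', rfl⟩))
  · intro hset
    have ha : ∀ i, (X i).val 0 0 = 0 := by
      intro i
      have : X i ∈ (Submodule.span (ternions F)ᵐᵒᵖ (Set.range X) : Set (ternions F)) :=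
        Submodule.subset_span ⟨i, rfl⟩
      rw [hset] at this
      exact this
    have hE01 : (tern (0:F) 1 0 : ternions F) ∈ Submodule.span (ternions F)ᵐᵒᵖ (Set.range X) := by
      have : (tern (0:F) 1 0 : ternions F) ∈
          (Submodule.span (ternions F)ᵐᵒᵖ (Set.range X) : Set (ternions F)) := by
        rw [hset]; exact tern00 0 1 0
      exact this
    have hE11 : (tern (0:F) 0 1 : ternions F) ∈ Submodule.span (ternions F)ᵐᵒᵖ (Set.range X) := by
      have : (tern (0:F) 0 1 : ternions F) ∈
          (Submodule.span (ternions F)ᵐᵒᵖ (Set.range X) : Set (ternions F)) := by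
        rw [hset]; exact tern00 0 0 1
      exact this
    constructor
    · intro r r' hrr
      simp only at hrr
      have hsub : (r - r') • X = 0 := by rw [sub_smul, hrr, sub_self]
      set e := r - r' with he
      have hk : ∀ A ∈ Submodule.span (ternions F)ᵐᵒᵖ (Set.range X), e * A = 0 := by
        intro A hA
        induction hA using Submodule.span_induction with
        | mem x hx =>
          obtain ⟨k, rfl⟩ := hx
          have := congrFun hsub k
          rw [smul_apply] at this
          exact this
        | zero => exact mul_zero e
        | add x y hx hy px py => rw [mul_add, px, py, add_zero]
        | smul m x hx px => rw [opsmul, ← mul_assoc, px, zero_mul]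
      have h1 := hk _ hE01
      have h2 := hk _ hE11
      have e00 : e.val 0 0 = 0 := by
        have := congrArg (fun z : ternions F => z.val 0 1) h1
        simp only [mul01, tern01, tern11, zero01, mul_one, mul_zero, add_zero] at this
        exact this
      have e01 : e.val 0 1 = 0 := by
        have := congrArg (fun z : ternions F => z.val 0 1) h2
        simp only [mul01, tern01, tern11, zero01, mul_one, mul_zero, zero_add] at this
        exact this
      have e11 : e.val 1 1 = 0 := by
        have := congrArg (fun z : ternions F => z.val 1 1) h2
        simp only [mul11, tern11, zero11, mul_one] at this
        exact this
      have hez : e = 0 := tern_ext (by rw [e00, zero00]) (by rw [e01, zero01]) (by rw [e11, zero11])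
      rw [he] at hez
      exact sub_eq_zero.mp hez
    · rintro ⟨φ, hφ⟩
      have hX : X = ∑ k, X k • (Pi.single k 1 : Fin (n + 1) → ternions F) := by
        funext m
        simp [Finset.sum_apply, Pi.single_apply, mul_ite]
      rw [hX, map_sum] at hφ
      simp only [map_smul, smul_eq_mul] at hφ
      have hcg := congrArg (fun z : ternions F => z.val 0 0) hφ
      have hsum : ((∑ k, X k * φ (Pi.single k 1)).val : Matrix (Fin 2) (Fin 2) F)
          = ∑ k, (X k * φ (Pi.single k 1)).val :=
        map_sum ((ternions F).subtype) _ _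
      rw [hsum, Matrix.sum_apply] at hcg
      simp only [mul00, ha, zero_mul, Finset.sum_const_zero, one00] at hcg
      exact zero_ne_one hcg
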